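/- Let σ be a permutation of {1,...,n} and v₁,...,v_n homogeneous elements of a Z/2-graded vector space, with w_i = πv_i their parity reversions. Then (-1)^{(n-1)|v₁|+(n-2)|v₂|+···+|v_{n-1}|} · sgn(σ) · ε(σ; v₁,...,v_n) = (-1)^{(n-1)|v_{σ(1)}|+(n-2)|v_{σ(2)}|+···+|v_{σ(n-1)}|} · ε(σ; w₁,...,w_n), where |w_i| = |v_i| + 1 mod 2. -/

import Mathlib

/-- `(-1)^a` for `a : ZMod 2`. -/
def pSign (k : Type*) [CommRing k] (a : ZMod 2) : k := (-1 : k) ^ a.val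

/-- The Koszul sign `ε(σ; v₁,…,v_n)` of a permutation acting on elements with
parities `p i`. -/
def koszulSign (k : Type*) [CommRing k] {n : ℕ} (p : Fin n → ZMod 2)
    (σ : Equiv.Perm (Fin n)) : k :=
  ∏ x ∈ Finset.univ.filter (fun x : Fin n × Fin n => x.1 < x.2 ∧ σ x.2 < σ x.1),
    (-1 : k) ^ ((p (σ x.1)) * (p (σ x.2))).val

open Finset Equiv

private lemma pSign_natCast (k : Type*) [CommRing k] (m : ℕ) :
    pSign k (m : ZMod 2) = (-1 : k) ^ m := by
  rw [pSign, ZMod.val_natCast, ← neg_one_pow_eq_pow_mod_two]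

private lemma pSign_add (k : Type*) [CommRing k] (a b : ZMod 2) :
    pSign k (a + b) = pSign k a * pSign k b := by
  have ha : ((a.val : ℕ) : ZMod 2) = a := by rw [ZMod.natCast_val, ZMod.cast_id]
  have hb : ((b.val : ℕ) : ZMod 2) = b := by rw [ZMod.natCast_val, ZMod.cast_id]
  rw [← ha, ← hb, ← Nat.cast_add, pSign_natCast, pSign_natCast, pSign_natCast, pow_add]

private lemma pSign_sum (k : Type*) [CommRing k] {ι : Type*} (s : Finset ι) (f : ι → ZMod 2) :
    pSign k (∑ i ∈ s, f i) = ∏ i ∈ s, pSign k (f i) := by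
  classical
  induction s using Finset.induction with
  | empty => simp [pSign]
  | insert _ _ h ih => rw [Finset.sum_insert h, Finset.prod_insert h, pSign_add, ih]

private lemma sign_eq_neg_one_pow {n : ℕ} (σ : Equiv.Perm (Fin n)) (k : Type*) [CommRing k] :
    ((Equiv.Perm.sign σ : ℤ) : k)
      = (-1 : k) ^ (Finset.univ.filter
          (fun x : Fin n × Fin n => x.1 < x.2 ∧ σ x.2 < σ x.1)).card := by
  have hsa : Equiv.Perm.sign σ = Equiv.Perm.signAux σ := by
    induction σ using Equiv.Perm.swap_induction_on
    case _ => simp [Equiv.Perm.signAux_one]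
    case _ f x y hxy ih =>
      rw [map_mul, Equiv.Perm.signAux_mul, ih, Equiv.Perm.sign_swap hxy,
        Equiv.Perm.signAux_swap hxy]
  have h1 : ((Equiv.Perm.signAux σ : ℤ) : k)
      = ∏ x ∈ Equiv.Perm.finPairsLT n, (if σ x.1 ≤ σ x.2 then (-1 : k) else 1) := by
    rw [Equiv.Perm.signAux]
    push_cast [apply_ite (fun (u : ℤˣ) => ((u : ℤ) : k))]
    rfl
  rw [hsa, h1, Finset.prod_ite, Finset.prod_const, Finset.prod_const_one, mul_one]
  congr 1
  refine Finset.card_bij' (fun x _ => (x.2, x.1)) (fun y _ => ⟨y.2, y.1⟩) ?hi ?hj ?li ?ri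
  case hi =>
    intro a ha
    simp only [Finset.mem_filter, Equiv.Perm.mem_finPairsLT] at ha
    simp only [Finset.mem_filter, Finset.mem_univ, true_and]
    exact ⟨ha.1, lt_of_le_of_ne ha.2 (fun h => (ne_of_gt ha.1) (σ.injective h.symm).symm)⟩
  case hj =>
    intro a ha
    simp only [Finset.mem_filter, Finset.mem_univ, true_and] at ha
    simp only [Finset.mem_filter, Equiv.Perm.mem_finPairsLT]
    exact ⟨ha.1, le_of_lt ha.2⟩
  case li => intro a _; rfl
  case ri => intro a _; rfl

private lemma card_filter_lt_fin {n : ℕ} (j : Fin n) :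
    (Finset.univ.filter (fun b : Fin n => b < j)).card = j.val := by
  have h : Finset.univ.filter (fun b : Fin n => b < j) = Finset.Iio j := by
    ext b; simp
  rw [h, Fin.card_Iio]

private lemma card_filter_perm_lt {n : ℕ} (σ : Equiv.Perm (Fin n)) (i : Fin n) :
    (Finset.univ.filter (fun b : Fin n => σ b < σ i)).card = (σ i).val := by
  rw [← card_filter_lt_fin (σ i)]
  refine Finset.card_bij' (fun b _ => σ b) (fun b _ => σ.symm b) ?hi ?hj ?li ?ri
  case hi =>
    intro a ha
    simp only [Finset.mem_filter, Finset.mem_univ, true_and] at ha ⊢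
    exact ha
  case hj =>
    intro a ha
    simp only [Finset.mem_filter, Finset.mem_univ, true_and] at ha ⊢
    simpa using ha
  case li => intro a _; simp
  case ri => intro a _; simp

private lemma count_lemma {n : ℕ} (σ : Equiv.Perm (Fin n)) (i : Fin n) :
    (Finset.univ.filter (fun b : Fin n => i < b ∧ σ b < σ i)).card
      + (Finset.univ.filter (fun a : Fin n => a < i ∧ σ i < σ a)).card
      ≡ i.val + (σ i).val [MOD 2] := by
  classical
  set A := Finset.univ.filter (fun b : Fin n => i < b ∧ σ b < σ i) with hA
  set B := Finset.univ.filter (fun a : Fin n => a < i ∧ σ i < σ a) with hB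
  set C := Finset.univ.filter (fun b : Fin n => b < i ∧ σ b < σ i) with hC
  have split1 : C.card + A.card = (σ i).val := by
    have hsplit := Finset.card_filter_add_card_filter_not
      (s := Finset.univ.filter (fun b : Fin n => σ b < σ i)) (p := fun b => b < i)
    have e1 : (Finset.univ.filter (fun b : Fin n => σ b < σ i)).filter (fun b => b < i) = C := by
      rw [Finset.filter_filter, hC]
      ext b
      simp only [Finset.mem_filter, Finset.mem_univ, true_and]
      tauto
    have e2 : (Finset.univ.filter (fun b : Fin n => σ b < σ i)).filter (fun b => ¬ b < i)
        = A := by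
      rw [Finset.filter_filter, hA]
      ext b
      simp only [Finset.mem_filter, Finset.mem_univ, true_and, not_lt]
      constructor
      · rintro ⟨hσ, hle⟩
        have hne : i ≠ b := fun h => absurd (h ▸ hσ) (lt_irrefl _)
        exact ⟨lt_of_le_of_ne hle hne, hσ⟩
      · rintro ⟨hlt, hσ⟩
        exact ⟨hσ, le_of_lt hlt⟩
    rw [e1, e2, card_filter_perm_lt] at hsplit
    exact hsplit
  have split2 : C.card + B.card = i.val := by
    have hsplit := Finset.card_filter_add_card_filter_not
      (s := Finset.univ.filter (fun b : Fin n => b < i)) (p := fun b => σ b < σ i)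
    have e1 : (Finset.univ.filter (fun b : Fin n => b < i)).filter (fun b => σ b < σ i) = C := by
      rw [Finset.filter_filter, hC]
    have e2 : (Finset.univ.filter (fun b : Fin n => b < i)).filter (fun b => ¬ σ b < σ i)
        = B := by
      rw [Finset.filter_filter, hB]
      ext b
      simp only [Finset.mem_filter, Finset.mem_univ, true_and, not_lt]
      constructor
      · rintro ⟨hlt, hle⟩
        have hne : σ i ≠ σ b := fun h => absurd ((σ.injective h) ▸ hlt) (lt_irrefl _)
        exact ⟨hlt, lt_of_le_of_ne hle hne⟩
      · rintro ⟨hlt, hσ⟩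
        exact ⟨hlt, le_of_lt hσ⟩
    rw [e1, e2, card_filter_lt_fin] at hsplit
    exact hsplit
  simp only [Nat.ModEq]
  omega

/-- Lemma 5: with `w_i = π v_i` the parity reversions
(`|w_i| = |v_i| + 1`),
`(-1)^{(n-1)|v₁|+⋯+|v_{n-1}|} sgn(σ) ε(σ; v) =
 (-1)^{(n-1)|v_{σ(1)}|+⋯+|v_{σ(n-1)}|} ε(σ; w)`. -/
theorem parity_reversion_sign_identity {k V : Type*} [Field k]
    [AddCommGroup V] [Module k V]
    (𝒱 : ZMod 2 → Submodule k V) {n : ℕ}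
    (v : Fin n → V) (p : Fin n → ZMod 2) (hp : ∀ i, v i ∈ 𝒱 (p i))
    (σ : Equiv.Perm (Fin n)) :
    pSign k (∑ i : Fin n, ((n - 1 - (i : ℕ) : ℕ) : ZMod 2) * p i) *
        ((Equiv.Perm.sign σ : ℤ) : k) * koszulSign k p σ
      = pSign k (∑ i : Fin n, ((n - 1 - (i : ℕ) : ℕ) : ZMod 2) * p (σ i)) *
          koszulSign k (fun i => p i + 1) σ := by
  classical
  set Inv : Finset (Fin n × Fin n) :=
    Finset.univ.filter (fun x : Fin n × Fin n => x.1 < x.2 ∧ σ x.2 < σ x.1) with hInv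
  set S1 : ZMod 2 := ∑ i : Fin n, ((n - 1 - (i : ℕ) : ℕ) : ZMod 2) * p i with hS1
  set S2 : ZMod 2 := ∑ i : Fin n, ((n - 1 - (i : ℕ) : ℕ) : ZMod 2) * p (σ i) with hS2
  set K : ZMod 2 := ∑ x ∈ Inv, p (σ x.1) * p (σ x.2) with hK
  set K' : ZMod 2 := ∑ x ∈ Inv, (p (σ x.1) + 1) * (p (σ x.2) + 1) with hK'
  have hks : koszulSign k p σ = pSign k K := by
    rw [hK, pSign_sum]; rfl
  have hks' : koszulSign k (fun i => p i + 1) σ = pSign k K' := by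
    rw [hK', pSign_sum]; rfl
  have hsign : ((Equiv.Perm.sign σ : ℤ) : k) = pSign k ((Inv.card : ℕ) : ZMod 2) := by
    rw [pSign_natCast, sign_eq_neg_one_pow]
  rw [hks, hks', hsign, ← pSign_add, ← pSign_add, ← pSign_add]
  suffices hmain : S1 + ((Inv.card : ℕ) : ZMod 2) + K = S2 + K' by rw [hmain]
  have hSa : (∑ x ∈ Inv, p (σ x.1))
      = ∑ i : Fin n, (((Finset.univ.filter (fun b : Fin n => i < b ∧ σ b < σ i)).card : ℕ)
          : ZMod 2) * p (σ i) := by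
    rw [hInv, Finset.sum_filter, Fintype.sum_prod_type]
    refine Finset.sum_congr rfl (fun i _ => ?_)
    dsimp only
    rw [← Finset.sum_filter, Finset.sum_const, nsmul_eq_mul]
  have hSb : (∑ x ∈ Inv, p (σ x.2))
      = ∑ i : Fin n, (((Finset.univ.filter (fun a : Fin n => a < i ∧ σ i < σ a)).card : ℕ)
          : ZMod 2) * p (σ i) := by
    rw [hInv, Finset.sum_filter, Fintype.sum_prod_type, Finset.sum_comm]
    refine Finset.sum_congr rfl (fun i _ => ?_)
    dsimp only
    rw [← Finset.sum_filter, Finset.sum_const, nsmul_eq_mul]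
  have key : S1 + S2 = (∑ x ∈ Inv, p (σ x.1)) + ∑ x ∈ Inv, p (σ x.2) := by
    have hre : S1 = ∑ i : Fin n, ((n - 1 - ((σ i : Fin n) : ℕ) : ℕ) : ZMod 2) * p (σ i) := by
      rw [hS1, ← Equiv.sum_comp σ (fun i => ((n - 1 - (i : ℕ) : ℕ) : ZMod 2) * p i)]
    rw [hre, hS2, hSa, hSb, ← Finset.sum_add_distrib, ← Finset.sum_add_distrib]
    refine Finset.sum_congr rfl (fun i _ => ?_)
    rw [← add_mul, ← add_mul, ← Nat.cast_add, ← Nat.cast_add]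
    congr 1
    rw [ZMod.natCast_eq_natCast_iff]
    have h1 := count_lemma σ i
    have h2 : i.val < n := i.isLt
    have h3 : (σ i).val < n := (σ i).isLt
    simp only [Nat.ModEq] at *
    omega
  have hexp : K' = K + ((∑ x ∈ Inv, p (σ x.1)) + (∑ x ∈ Inv, p (σ x.2))
      + ((Inv.card : ℕ) : ZMod 2)) := by
    rw [hK', hK]
    have hterm : ∀ x ∈ Inv, (p (σ x.1) + 1) * (p (σ x.2) + 1)
        = p (σ x.1) * p (σ x.2) + (p (σ x.1) + (p (σ x.2) + 1)) := by
      intro x _; ring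
    rw [Finset.sum_congr rfl hterm, Finset.sum_add_distrib, Finset.sum_add_distrib,
      Finset.sum_add_distrib, Finset.sum_const, nsmul_eq_mul, mul_one]
    ring
  rw [hexp]
  have h2 : S2 + S2 = 0 := by
    have h20 : (2 : ZMod 2) = 0 := rfl
    calc S2 + S2 = 2 * S2 := by ring
    _ = 0 := by rw [h20]; ring
  linear_combination key - h2
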